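/- If E is a right-invariant equivalence on the reversal Aʳ of an NFA A (a left-invariant equivalence on A), then L(A/E) = L(A), where the quotient is taken on A itself. -/

import Mathlib

/-- `E` is a right-invariant equivalence relation w.r.t. the NFA `M`:
it is an equivalence, it refines the partition `{Q∖F, F}`, and related
states have the same sets of `E`-classes of successors. -/
def RightInvariant {A Q : Type*} (M : NFA A Q) (E : Q → Q → Prop) : Prop :=
  Equivalence E ∧
  (∀ p q, E p q → (p ∈ M.accept ↔ q ∈ M.accept)) ∧
  (∀ p q a, E p q →
    (∀ r ∈ M.step p a, ∃ s ∈ M.step q a, E r s) ∧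
    (∀ s ∈ M.step q a, ∃ r ∈ M.step p a, E r s))

/-- The quotient of an NFA by an equivalence relation on its states. -/
def quotNFA {A Q : Type*} (M : NFA A Q) (s : Setoid Q) : NFA A (Quotient s) where
  step := fun x a => {y | ∃ p q, x = Quotient.mk s p ∧ y = Quotient.mk s q ∧ q ∈ M.step p a}
  start := {x | ∃ p ∈ M.start, x = Quotient.mk s p}
  accept := {x | ∃ p ∈ M.accept, x = Quotient.mk s p}

/-- The reversal of an NFA (with set of initial states). -/
def reverseNFA {A Q : Type*} (M : NFA A Q) : NFA A Q where
  step := fun q a => {p | q ∈ M.step p a}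
  start := M.accept
  accept := M.start

/-- Quotienting an NFA by a left-invariant equivalence (i.e. a right-invariant
equivalence of its reversal) preserves the language. -/
theorem quotNFA_left_accepts {A Q : Type*} (M : NFA A Q) (E : Q → Q → Prop)
    (h : RightInvariant (reverseNFA M) E) :
    (quotNFA M ⟨E, h.1⟩).accepts = M.accepts := by
  set s : Setoid Q := ⟨E, h.1⟩ with hs
  set N := quotNFA M s with hN
  have key : ∀ (x : List A) (p : Q), Quotient.mk s p ∈ N.eval x ↔ p ∈ M.eval x := by
    intro x
    induction x using List.reverseRecOn with
    | nil =>
      intro p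
      show Quotient.mk s p ∈ N.start ↔ p ∈ M.start
      constructor
      · rintro ⟨p0, hp0, hq⟩
        have hE : E p0 p := Quotient.eq.mp hq.symm
        exact (h.2.1 p0 p hE).mp hp0
      · intro hp
        exact ⟨p, hp, rfl⟩
    | append_singleton xs a ih =>
      intro p
      rw [NFA.eval, NFA.eval, NFA.evalFrom_append, NFA.evalFrom_singleton,
        NFA.evalFrom_append, NFA.evalFrom_singleton, NFA.mem_stepSet, NFA.mem_stepSet]
      constructor
      · rintro ⟨y, hy, r', q', hy', hq', hstep⟩
        have hE : E q' p := Quotient.eq.mp hq'.symm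
        obtain ⟨r'', hr'', hEr⟩ := (h.2.2 q' p a hE).1 r' hstep
        have : Quotient.mk s r'' ∈ N.evalFrom N.start xs := by
          rw [show Quotient.mk s r'' = y from (hy'.symm ▸ (Quotient.eq.mpr hEr).symm : _)]
          exact hy
        exact ⟨r'', (ih r'').mp this, hr''⟩
      · rintro ⟨r, hr, hstep⟩
        exact ⟨Quotient.mk s r, (ih r).mpr hr, r, p, rfl, rfl, hstep⟩
  ext x
  constructor
  · rintro ⟨y, ⟨p, hp, rfl⟩, hy⟩
    exact ⟨p, hp, (key x p).mp hy⟩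
  · rintro ⟨p, hp, hev⟩
    exact ⟨Quotient.mk s p, ⟨p, hp, rfl⟩, (key x p).mpr hev⟩
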